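/- Let N be a finite index set, b ∈ ℕ with |N| ≥ b + 1, and (λ̌_j)_{j∈N} a family of vectors in a real inner product space. Let B ⊆ N with |B| ≤ b (the Byzantine senders). Let C be the (b+1)-th largest element of the multiset of norms {‖λ̌_j‖ : j ∈ N} (i.e., the (b+1)-th entry of these norms sorted in nonincreasing order, counted with multiplicity). Then for every j ∈ N: ‖clip_C(λ̌_j)‖ ≤ max_{j' ∈ N∖B} ‖λ̌_{j'}‖. -/

import Mathlib

/-- The clipping operator `clip_C(v) = min(1, C/‖v‖)·v` (with `clip_C(0) = 0`,
since in Lean `C/0 = 0`). -/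
noncomputable def clip {E : Type*} [NormedAddCommGroup E] [InnerProductSpace ℝ E]
    (C : ℝ) (v : E) : E := min 1 (C / ‖v‖) • v

/-- **Adaptive robust clipping (ARC) guarantee:** with the clipping threshold
chosen as the (b+1)-th largest received norm (the entry at position
`N.card - 1 - b` of the norms sorted in nondecreasing order, counted with
multiplicity), and at most `b` Byzantine senders, every clipped vector has
norm at most the maximal norm of the benign received vectors. -/
theorem arc_clip_norm_le_max_benign
    {E : Type*} [NormedAddCommGroup E] [InnerProductSpace ℝ E]
    {ι : Type*} [DecidableEq ι]
    (N : Finset ι) (b : ℕ) (hNb : b + 1 ≤ N.card)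
    (lamc : ι → E)
    (B : Finset ι) (hBN : B ⊆ N) (hB : B.card ≤ b)
    (C : ℝ)
    (hC : C = ((N.val.map fun j => ‖lamc j‖).sort (· ≤ ·)).getD
        (N.card - 1 - b) 0) :
    ∀ j ∈ N, ‖clip C (lamc j)‖
      ≤ sSup ((fun j' => ‖lamc j'‖) '' ((N \ B : Finset ι) : Set ι)) := by
  intro j hj
  set l := ((N.val.map fun j => ‖lamc j‖).sort (· ≤ ·)) with hl
  have hlen : l.length = N.card := by
    simp [hl, Multiset.length_sort]
  set k := N.card - 1 - b with hk
  have hkl : k < l.length := by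
    rw [hlen]
    omega
  have hCget : C = l.get ⟨k, hkl⟩ := by
    rw [hC, List.getD_eq_getElem _ _ hkl]
    rfl
  -- C is ≥ 0
  have hsorted : l.Pairwise (· ≤ ·) := Multiset.pairwise_sort (r := (· ≤ ·)) (s := _)
  have hCmem : C ∈ l := hCget ▸ l.get_mem ⟨k, hkl⟩
  have hCmem' : C ∈ (N.val.map fun j => ‖lamc j‖) := by
    rw [← Multiset.sort_eq (r := (· ≤ ·)) (s := (N.val.map fun j => ‖lamc j‖))]
    exact hCmem
  obtain ⟨j1, _, hj1⟩ := Multiset.mem_map.mp hCmem'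
  have hC0 : 0 ≤ C := hj1 ▸ norm_nonneg _
  have hmono : ∀ m (hm : m < l.length), k ≤ m → C ≤ l[m] := by
    intro m hm hkm
    rcases eq_or_lt_of_le hkm with rfl | h
    · rw [hCget]; simp [List.get_eq_getElem]
    · have := hsorted.rel_get_of_lt (a := ⟨k, hkl⟩) (b := ⟨m, hm⟩) h
      simpa [hCget, List.get_eq_getElem] using this
  have hdrop : ∀ x ∈ l.drop k, C ≤ x := by
    intro x hx
    obtain ⟨i, hi, rfl⟩ := List.mem_iff_getElem.mp hx
    rw [List.getElem_drop]
    have hi' : i < l.length - k := by simpa using hi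
    exact hmono _ (by omega) (Nat.le_add_right _ _)
  -- counting
  have hcount : b + 1 ≤ (N.filter (fun j => C ≤ ‖lamc j‖)).card := by
    have h1 : (N.filter (fun j => C ≤ ‖lamc j‖)).card
        = Multiset.countP (fun x => C ≤ x) (N.val.map fun j => ‖lamc j‖) := by
      rw [Multiset.countP_map]
      rfl
    rw [h1, ← Multiset.sort_eq (r := (· ≤ ·)) (s := (N.val.map fun j => ‖lamc j‖)), Multiset.coe_countP, ← hl]
    have h2 : (l.drop k).countP (fun x => decide (C ≤ x)) = (l.drop k).length :=
      List.countP_eq_length.mpr (fun a ha => by simpa using hdrop a ha)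
    calc b + 1 = (l.drop k).length := by rw [List.length_drop, hlen]; omega
    _ = (l.drop k).countP (fun x => decide (C ≤ x)) := h2.symm
    _ ≤ l.countP (fun x => decide (C ≤ x)) := by
        conv_rhs => rw [← List.take_append_drop k l]
        rw [List.countP_append]
        omega
  -- find benign j0 with C ≤ ‖lamc j0‖
  have : ¬ (N.filter (fun j => C ≤ ‖lamc j‖)) ⊆ B := fun h =>
    absurd (Finset.card_le_card h) (by omega)
  obtain ⟨j0, hj0f, hj0B⟩ := Finset.not_subset.mp this
  have hj0N : j0 ∈ N := Finset.mem_filter.mp hj0f |>.1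
  have hj0C : C ≤ ‖lamc j0‖ := Finset.mem_filter.mp hj0f |>.2
  -- sSup bound
  have hfin : (((fun j' => ‖lamc j'‖) '' ((N \ B : Finset ι) : Set ι))).Finite :=
    Set.Finite.image _ (Finset.finite_toSet _)
  have hmem : ‖lamc j0‖ ∈ (fun j' => ‖lamc j'‖) '' ((N \ B : Finset ι) : Set ι) :=
    ⟨j0, by simp [Finset.mem_sdiff, hj0N, hj0B], rfl⟩
  have hle : C ≤ sSup ((fun j' => ‖lamc j'‖) '' ((N \ B : Finset ι) : Set ι)) :=
    hj0C.trans (le_csSup hfin.bddAbove hmem)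
  refine le_trans ?_ hle
  unfold clip
  rw [norm_smul, Real.norm_eq_abs]
  rcases eq_or_ne (lamc j) 0 with h0 | h0
  · simp [h0, hC0]
  · have hv : 0 < ‖lamc j‖ := norm_pos_iff.mpr h0
    rcases le_or_gt 1 (C / ‖lamc j‖) with h | h
    · rw [min_eq_left h, abs_one, one_mul]
      rw [le_div_iff₀ hv] at h; linarith
    · rw [min_eq_right h.le, abs_of_nonneg (div_nonneg hC0 hv.le), div_mul_cancel₀ _ hv.ne']
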